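/- Let g ≥ 1, set k_g = 4 if g = 1, k_g = 2 if g = 2, and k_g = 1 if g ≥ 3. Let G ⊆ 𝔽₂^{2g} be a Göpel group with even coset M, and lift each characteristic m ∈ M to a vector in {0,1}^{2g} ⊆ ℤ^{2g}. Then for all indices i, j ∈ {1,…,2g} one has k_g · Σ_{m∈M} mᵢmⱼ ≡ 0 mod 2, and for every index i one has k_g · Σ_{m∈M} mᵢ ≡ 0 mod 4. -/

import Mathlib

open BigOperators

/-- Theta characteristics in genus `g`: pairs `(a, b)` with `a, b ∈ 𝔽₂^g`. -/
abbrev TChar (g : ℕ) := (Fin g → ZMod 2) × (Fin g → ZMod 2)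

/-- A theta characteristic `(a, b)` is even if `Σᵢ aᵢbᵢ = 0` in `𝔽₂`. -/
def IsEvenChar {g : ℕ} (m : TChar g) : Prop := ∑ i, m.1 i * m.2 i = 0

/-- The standard symplectic pairing `⟨m,n⟩ = aᵀβ + bᵀα` on `𝔽₂^{2g}`. -/
def symplecticPairing {g : ℕ} (m n : TChar g) : ZMod 2 :=
  ∑ i, (m.1 i * n.2 i + m.2 i * n.1 i)

/-- A subspace is totally isotropic if the symplectic pairing vanishes on it. -/
def IsIsotropic {g : ℕ} (G : Submodule (ZMod 2) (TChar g)) : Prop :=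
  ∀ m ∈ G, ∀ n ∈ G, symplecticPairing m n = 0

/-- A Göpel group is a maximal totally isotropic subspace of `𝔽₂^{2g}`. -/
def IsGopel {g : ℕ} (G : Submodule (ZMod 2) (TChar g)) : Prop :=
  IsIsotropic G ∧ ∀ G' : Submodule (ZMod 2) (TChar g), IsIsotropic G' → G ≤ G' → G' = G

/-- The lift of a characteristic to a vector in `{0,1}^{2g} ⊆ ℤ^{2g}`. -/
def charLift {g : ℕ} (m : TChar g) : (Fin g ⊕ Fin g) → ℤ :=
  Sum.elim (fun i => ((m.1 i).val : ℤ)) (fun i => ((m.2 i).val : ℤ))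

section Aux
open Module

noncomputable def sB (g : ℕ) : LinearMap.BilinForm (ZMod 2) (TChar g) :=
  LinearMap.mk₂ (ZMod 2) symplecticPairing
    (by intro m m' n; simp [symplecticPairing, add_mul, mul_add, Finset.sum_add_distrib]; ring_nf)
    (by intro c m n; simp [symplecticPairing, Finset.mul_sum, mul_add]; exact Finset.sum_congr rfl fun i _ => by ring)
    (by intro m n n'; simp [symplecticPairing, add_mul, mul_add, Finset.sum_add_distrib]; ring_nf)
    (by intro c m n; simp [symplecticPairing, Finset.mul_sum, mul_add]; exact Finset.sum_congr rfl fun i _ => by ring)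

lemma sB_apply {g : ℕ} (m n : TChar g) : sB g m n = symplecticPairing m n := rfl

lemma sB_symm {g : ℕ} (m n : TChar g) : sB g m n = sB g n m := by
  simp only [sB_apply, symplecticPairing]; apply Finset.sum_congr rfl; intros; ring

lemma sB_refl {g : ℕ} : (sB g).IsRefl := fun m n h => by rw [sB_symm]; exact h

lemma sB_alt {g : ℕ} (m : TChar g) : sB g m m = 0 := by
  simp only [sB_apply, symplecticPairing]
  rw [Finset.sum_eq_zero]; intro i _; rw [mul_comm (m.2 i)]; exact (CharTwo.add_self_eq_zero _ : (m.1 i * m.2 i) + (m.1 i * m.2 i) = 0)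

lemma sB_nondeg {g : ℕ} : (sB g).Nondegenerate := by
  refine (LinearMap.IsRefl.nondegenerate_iff_separatingLeft sB_refl).2 ?_
  intro m h
  ext i
  · have := h (0, Pi.single i 1)
    simpa [sB_apply, symplecticPairing, Pi.single_apply, Finset.sum_ite_eq', mul_comm] using this
  · have := h (Pi.single i 1, 0)
    simpa [sB_apply, symplecticPairing, Pi.single_apply, Finset.sum_ite_eq', mul_comm] using this

lemma finrank_TChar (g : ℕ) : finrank (ZMod 2) (TChar g) = 2 * g := by
  rw [finrank_prod]
  simp [finrank_pi]
  ring

lemma gopel_finrank {g : ℕ} (G : Submodule (ZMod 2) (TChar g)) (hG : IsGopel G) :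
    finrank (ZMod 2) G = g := by
  have horth : (sB g).orthogonal G = G := by
    apply le_antisymm
    · intro v hv
      have hv' : ∀ n ∈ G, sB g n v = 0 := hv
      set G' := G ⊔ Submodule.span (ZMod 2) {v} with hG'
      have hiso : IsIsotropic G' := by
        intro m hm n hn
        rw [Submodule.mem_sup] at hm hn
        obtain ⟨x, hx, m', hm', rfl⟩ := hm
        obtain ⟨y, hy, n', hn', rfl⟩ := hn
        rw [Submodule.mem_span_singleton] at hm' hn'
        obtain ⟨c, rfl⟩ := hm'
        obtain ⟨d, rfl⟩ := hn'
        have : symplecticPairing (x + c • v) (y + d • v) = sB g (x + c • v) (y + d • v) := rfl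
        simp only [this, map_add, map_smul, LinearMap.add_apply, LinearMap.smul_apply]
        rw [show sB g x y = 0 from hG.1 x hx y hy, hv' x hx,
          show sB g v y = 0 from by rw [sB_symm]; exact hv' y hy, sB_alt]
        simp
      have := hG.2 G' hiso le_sup_left
      rw [← this]
      exact Submodule.mem_sup_right (Submodule.mem_span_singleton_self v)
    · intro x hx
      intro n hn
      exact hG.1 n hn x hx
  have hfr := LinearMap.BilinForm.finrank_orthogonal sB_nondeg G
  rw [horth, finrank_TChar] at hfr
  have hle : finrank (ZMod 2) G ≤ 2 * g := by
    have := Submodule.finrank_le G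
    rwa [finrank_TChar] at this
  omega

open Module in
lemma fiber_card {V W : Type*} [AddCommGroup V] [Module (ZMod 2) V] [Fintype V]
    [AddCommGroup W] [Module (ZMod 2) W]
    (f : V →ₗ[ZMod 2] W) (w : W) :
    Nat.card {x : V // f x = w} = 0 ∨
      Nat.card {x : V // f x = w} =
        2 ^ (finrank (ZMod 2) V - finrank (ZMod 2) (LinearMap.range f)) := by
  classical
  by_cases h : ∃ x0, f x0 = w
  · right
    obtain ⟨x0, hx0⟩ := h
    have e : {x : V // f x = w} ≃ LinearMap.ker f :=
      { toFun := fun x => ⟨x.1 - x0, by simp [LinearMap.mem_ker, map_sub, x.2, hx0]⟩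
        invFun := fun y => ⟨y.1 + x0,
          by have := y.2; simp only [LinearMap.mem_ker] at this; simp [map_add, this, hx0]⟩
        left_inv := fun x => by simp
        right_inv := fun y => by simp }
    rw [Nat.card_congr e]
    letI : Fintype (LinearMap.ker f) := Fintype.ofFinite _
    rw [Nat.card_eq_fintype_card, card_eq_pow_finrank (K := ZMod 2), ZMod.card]
    congr 1
    have := LinearMap.finrank_range_add_finrank_ker f
    have h2 : finrank (ZMod 2) (LinearMap.range f) ≤ finrank (ZMod 2) V := by
      rw [← this]; omega
    omega
  · left
    rw [Nat.card_eq_zero]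
    left
    constructor
    intro x
    exact h ⟨x.1, x.2⟩

def coordL {g : ℕ} (i : Fin g ⊕ Fin g) : TChar g →ₗ[ZMod 2] ZMod 2 :=
  match i with
  | .inl i => (LinearMap.proj i).comp (LinearMap.fst (ZMod 2) _ _)
  | .inr i => (LinearMap.proj i).comp (LinearMap.snd (ZMod 2) _ _)

lemma zmod2_val_eq (v : ZMod 2) : ((v.val : ℤ)) = if v = 1 then 1 else 0 := by fin_cases v <;> rfl

lemma charLift_eq {g : ℕ} (m : TChar g) (i : Fin g ⊕ Fin g) :
    charLift m i = if coordL i m = 1 then (1 : ℤ) else 0 := by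
  cases i <;>
    simp only [charLift, coordL, Sum.elim_inl, Sum.elim_inr, LinearMap.comp_apply,
      LinearMap.fst_apply, LinearMap.snd_apply, LinearMap.proj_apply] <;>
    exact zmod2_val_eq _

open Module in
lemma main_count {g : ℕ} (G : Submodule (ZMod 2) (TChar g)) (hGr : finrank (ZMod 2) G = g)
    (a : TChar g) (i j : Fin g ⊕ Fin g) :
    ∃ (c r : ℕ), r ≤ 2 ∧ (i = j → r ≤ 1) ∧
      (∑ᶠ m ∈ ((fun x => a + x) '' (G : Set (TChar g))), charLift m i * charLift m j) = (c : ℤ) ∧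
      (c = 0 ∨ c = 2 ^ (g - r)) := by
  classical
  set f : TChar g → ℤ := fun m => charLift m i * charLift m j with hf
  have hinj : ((G : Set (TChar g))).InjOn (fun x => a + x) :=
    fun x _ y _ h => by simpa using h
  have hfin : ((G : Set (TChar g))).Finite := Set.toFinite _
  have h1 : (∑ᶠ m ∈ ((fun x => a + x) '' (G : Set (TChar g))), f m)
      = ∑ᶠ x ∈ (G : Set (TChar g)), f (a + x) := finsum_mem_image hinj
  have h2 : (∑ᶠ x ∈ (G : Set (TChar g)), f (a + x)) = ∑ x ∈ hfin.toFinset, f (a + x) :=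
    finsum_mem_eq_finite_toFinset_sum _ hfin
  have h3 : (∑ x ∈ hfin.toFinset, f (a + x)) = ∑ x : G, f (a + ↑x) := by
    rw [← Finset.sum_coe_sort]
    exact Fintype.sum_equiv (Equiv.subtypeEquivRight
      (fun x => by simp only [Set.Finite.mem_toFinset, SetLike.mem_coe])) _ _ (fun x => rfl)
  -- the linear map and target
  set L : G →ₗ[ZMod 2] ZMod 2 × ZMod 2 :=
    ((coordL i).comp G.subtype).prod ((coordL j).comp G.subtype) with hL
  set w : ZMod 2 × ZMod 2 := (1 - coordL i a, 1 - coordL j a) with hw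
  have h4 : ∀ x : G, f (a + ↑x) = if L x = w then (1 : ℤ) else 0 := by
    intro x
    rw [hf]
    simp only [charLift_eq, map_add]
    have hiff : L x = w ↔ (coordL i a + coordL i ↑x = 1 ∧ coordL j a + coordL j ↑x = 1) := by
      rw [hL, hw, Prod.ext_iff]
      simp only [LinearMap.prod_apply, LinearMap.comp_apply, Submodule.subtype_apply,
        Function.prod]
      constructor
      · rintro ⟨h1', h2'⟩
        constructor <;> [rw [h1']; rw [h2']] <;> ring
      · rintro ⟨h1', h2'⟩
        constructor <;> [rw [← h1']; rw [← h2']] <;> ring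
    by_cases hP : L x = w
    · obtain ⟨e1, e2⟩ := hiff.1 hP
      rw [if_pos e1, if_pos e2, if_pos hP]; norm_num
    · rw [if_neg hP]
      by_cases e1 : coordL i a + coordL i ↑x = 1
      · have e2 : ¬ (coordL j a + coordL j ↑x = 1) := fun e2 => hP (hiff.2 ⟨e1, e2⟩)
        rw [if_pos e1, if_neg e2]; ring
      · rw [if_neg e1]; ring
  have h5 : (∑ x : G, f (a + ↑x)) = ((Finset.univ.filter (fun x : G => L x = w)).card : ℤ) := by
    rw [Finset.sum_congr rfl (fun x _ => h4 x), Finset.sum_boole]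
  have h6 : (Finset.univ.filter (fun x : G => L x = w)).card = Nat.card {x : G // L x = w} := by
    rw [Nat.card_eq_fintype_card, Fintype.card_subtype]
  have hr2 : finrank (ZMod 2) (LinearMap.range L) ≤ 2 := by
    have := Submodule.finrank_le (LinearMap.range L)
    simpa [finrank_prod] using this
  have hrij : i = j → finrank (ZMod 2) (LinearMap.range L) ≤ 1 := by
    rintro rfl
    have hle : LinearMap.range L ≤ Submodule.span (ZMod 2) {((1 : ZMod 2), (1 : ZMod 2))} := by
      rintro y ⟨x, rfl⟩
      rw [Submodule.mem_span_singleton]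
      exact ⟨coordL i ↑x, by simp [hL, Prod.smul_mk, Prod.ext_iff, mul_comm]⟩
    calc finrank (ZMod 2) (LinearMap.range L)
        ≤ finrank (ZMod 2) (Submodule.span (ZMod 2) {((1 : ZMod 2), (1 : ZMod 2))}) :=
          Submodule.finrank_mono hle
      _ ≤ 1 := by
          have : ({((1 : ZMod 2), (1 : ZMod 2))} : Set (ZMod 2 × ZMod 2)).toFinset.card ≤ 1 := by
            simp
          exact le_trans (finrank_span_le_card _) this
  refine ⟨Nat.card {x : G // L x = w}, finrank (ZMod 2) (LinearMap.range L), hr2, hrij, ?_, ?_⟩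
  · rw [h1, h2, h3, h5, h6]
  · rcases fiber_card L w with hc | hc
    · exact Or.inl hc
    · exact Or.inr (by rw [hc, hGr])

end Aux

/-- Congruences satisfied by the even coset `M` of a Göpel group, where
`k_g = 4, 2, 1` for `g = 1`, `g = 2`, `g ≥ 3`:
`k_g Σ_{m∈M} mᵢmⱼ ≡ 0 (mod 2)` and `k_g Σ_{m∈M} mᵢ ≡ 0 (mod 4)`. -/
theorem gopel_even_coset_congruences (g : ℕ) (hg : 1 ≤ g)
    (k : ℤ) (hk : k = if g = 1 then 4 else if g = 2 then 2 else 1)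
    (G : Submodule (ZMod 2) (TChar g)) (hG : IsGopel G) (a : TChar g)
    (M : Set (TChar g)) (hM : M = (fun x => a + x) '' (G : Set (TChar g)))
    (heven : ∀ m ∈ M, IsEvenChar m) :
    (∀ i j : Fin g ⊕ Fin g, (2 : ℤ) ∣ k * ∑ᶠ m ∈ M, charLift m i * charLift m j) ∧
    (∀ i : Fin g ⊕ Fin g, (4 : ℤ) ∣ k * ∑ᶠ m ∈ M, charLift m i) := by
  subst hM hk
  have hGr := gopel_finrank G hG
  constructor
  · intro i j
    obtain ⟨c, r, hr2, -, hsum, hval⟩ := main_count G hGr a i j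
    rw [hsum]
    rcases hval with rfl | rfl
    · simp
    · by_cases h1 : g = 1
      · rw [if_pos h1]; exact Dvd.dvd.mul_right (by norm_num : (2:ℤ) ∣ 4) _
      · rw [if_neg h1]
        by_cases h2 : g = 2
        · rw [if_pos h2]; exact Dvd.dvd.mul_right (dvd_refl 2) _
        · rw [if_neg h2, one_mul]
          push_cast
          exact dvd_pow_self 2 (by omega)
  · intro i
    have hsq : (∑ᶠ m ∈ ((fun x => a + x) '' (G : Set (TChar g))), charLift m i)
        = ∑ᶠ m ∈ ((fun x => a + x) '' (G : Set (TChar g))), charLift m i * charLift m i :=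
      finsum_mem_congr rfl (fun m _ => by rw [charLift_eq]; split_ifs <;> ring)
    rw [hsq]
    obtain ⟨c, r, -, hr1, hsum, hval⟩ := main_count G hGr a i i
    rw [hsum]
    have hr1 := hr1 rfl
    rcases hval with rfl | rfl
    · simp
    · by_cases h1 : g = 1
      · rw [if_pos h1]; exact Dvd.dvd.mul_right (dvd_refl 4) _
      · rw [if_neg h1]
        by_cases h2 : g = 2
        · rw [if_pos h2]
          have : (2:ℤ) ∣ ((2 ^ (g - r) : ℕ) : ℤ) := by
            push_cast; exact dvd_pow_self 2 (by omega)
          obtain ⟨t, ht⟩ := this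
          exact ⟨t, by rw [ht]; ring⟩
        · rw [if_neg h2, one_mul]
          have : (4:ℤ) = 2 ^ 2 := by norm_num
          rw [this]
          push_cast
          exact pow_dvd_pow (2:ℤ) (show 2 ≤ g - r by omega)
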